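/- Let n ≥ 3 and let Q₁, Q₂ be real symmetric n×n matrices. Then the set S(Q₁,Q₂) := {(xᵀQ₁x, xᵀQ₂x) : x ∈ ℝⁿ, ‖x‖ = 1} equals the set {(Tr(Q₁X), Tr(Q₂X)) : X real symmetric n×n, X positive semidefinite, Tr(X) = 1}. -/

import Mathlib

open Matrix

namespace BrickmanAux

open Finset

variable {n : ℕ}

/-- The quadric-on-sphere set in diagonal coordinates. -/
def Kdiag (lam : Fin n → ℝ) : Set (Fin n → ℝ) :=
  {z | ∑ i, z i ^ 2 = 1 ∧ ∑ i, lam i * z i ^ 2 = 0}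

/-- The corresponding polytope of squared coordinates. -/
def Dset (lam : Fin n → ℝ) : Set (Fin n → ℝ) :=
  {x | (∀ i, 0 ≤ x i) ∧ ∑ i, x i = 1 ∧ ∑ i, lam i * x i = 0}

/-- Signed square-root lift. -/
noncomputable def lift (σ x : Fin n → ℝ) : Fin n → ℝ := fun i => σ i * Real.sqrt (x i)

def pm1 (σ : Fin n → ℝ) : Prop := ∀ i, σ i = 1 ∨ σ i = -1

lemma pm1.sq {σ : Fin n → ℝ} (hσ : pm1 σ) (i : Fin n) : σ i ^ 2 = 1 := by
  rcases hσ i with h | h <;> rw [h] <;> norm_num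

lemma lift_sq {σ x : Fin n → ℝ} (hσ : pm1 σ) (hx : ∀ i, 0 ≤ x i) (i : Fin n) :
    lift σ x i ^ 2 = x i := by
  unfold lift
  rw [mul_pow, hσ.sq, one_mul, Real.sq_sqrt (hx i)]

lemma lift_mem {lam σ x : Fin n → ℝ} (hσ : pm1 σ) (hx : x ∈ Dset lam) :
    lift σ x ∈ Kdiag lam := by
  obtain ⟨h0, h1, h2⟩ := hx
  constructor
  · rw [← h1]; exact Finset.sum_congr rfl fun i _ => lift_sq hσ h0 i
  · rw [← h2]; exact Finset.sum_congr rfl fun i _ => by rw [lift_sq hσ h0 i]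

lemma Dset.convex_aux {lam x y : Fin n → ℝ} (hx : x ∈ Dset lam) (hy : y ∈ Dset lam)
    {t : ℝ} (ht0 : 0 ≤ t) (ht1 : t ≤ 1) :
    (fun i => (1 - t) * x i + t * y i) ∈ Dset lam := by
  obtain ⟨hx0, hx1, hx2⟩ := hx
  obtain ⟨hy0, hy1, hy2⟩ := hy
  refine ⟨fun i => show (0:ℝ) ≤ (1 - t) * x i + t * y i by nlinarith [hx0 i, hy0 i], ?_, ?_⟩
  · rw [Finset.sum_add_distrib, ← Finset.mul_sum, ← Finset.mul_sum, hx1, hy1]; ring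
  · have : ∀ i, lam i * ((1 - t) * x i + t * y i)
        = (1 - t) * (lam i * x i) + t * (lam i * y i) := fun i => by ring
    simp_rw [this]
    rw [Finset.sum_add_distrib, ← Finset.mul_sum, ← Finset.mul_sum, hx2, hy2]; ring

/-- Master lemma: signed lifts of two polytope points are joined inside the quadric. -/
lemma joined_lift {lam σ : Fin n → ℝ} (hσ : pm1 σ) {x y : Fin n → ℝ}
    (hx : x ∈ Dset lam) (hy : y ∈ Dset lam) :
    JoinedIn (Kdiag lam) (lift σ x) (lift σ y) := by
  have hf : Continuous fun t : ℝ => lift σ fun i => (1 - t) * x i + t * y i := by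
    unfold lift
    refine continuous_pi fun i => continuous_const.mul ?_
    exact Real.continuous_sqrt.comp (by fun_prop)
  refine ⟨⟨⟨fun t => lift σ fun i => (1 - (t : ℝ)) * x i + (t : ℝ) * y i,
      hf.comp continuous_subtype_val⟩, ?_, ?_⟩, fun t => ?_⟩
  · simp only [Set.Icc.coe_zero, sub_zero, zero_mul, add_zero, one_mul]
  · simp only [Set.Icc.coe_one, sub_self, zero_mul, one_mul, zero_add]
  · exact lift_mem hσ (Dset.convex_aux hx hy t.2.1 t.2.2)

/-- Two-point (or one-point) vector. -/
def tp (p q : Fin n) (a b : ℝ) : Fin n → ℝ := fun i => if i = p then a else if i = q then b else 0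

lemma sum_tp {p q : Fin n} (hpq : p ≠ q) (f : Fin n → ℝ) (a b : ℝ) :
    ∑ i, f i * tp p q a b i = f p * a + f q * b := by
  have h : ∀ i, f i * tp p q a b i
      = (if i = p then f p * a else 0) + (if i = q then f q * b else 0) := by
    intro i
    unfold tp
    rcases eq_or_ne i p with rfl | h1
    · simp [hpq]
    · rcases eq_or_ne i q with rfl | h2
      · simp [h1]
      · simp [h1, h2]
  simp_rw [h]
  rw [Finset.sum_add_distrib, Finset.sum_ite_eq' Finset.univ p fun _ => f p * a,
    Finset.sum_ite_eq' Finset.univ q fun _ => f q * b]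
  simp

lemma tp_mem {lam : Fin n → ℝ} {p q : Fin n} (hpq : p ≠ q)
    (hp : 0 < lam p) (hq : lam q < 0) :
    tp p q (-lam q / (lam p - lam q)) (lam p / (lam p - lam q)) ∈ Dset lam := by
  have hd : 0 < lam p - lam q := by linarith
  refine ⟨fun i => ?_, ?_, ?_⟩
  · unfold tp
    split_ifs
    · exact div_nonneg (by linarith) hd.le
    · exact div_nonneg hp.le hd.le
    · exact le_refl 0
  · rw [show (∑ i, tp p q (-lam q / (lam p - lam q)) (lam p / (lam p - lam q)) i)
        = ∑ i, (1:ℝ) * tp p q (-lam q / (lam p - lam q)) (lam p / (lam p - lam q)) i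
        by simp only [one_mul], sum_tp hpq]
    field_simp
    ring
  · rw [sum_tp hpq]
    field_simp
    ring

lemma exists_neg {lam : Fin n → ℝ} {x₀ : Fin n → ℝ} (hx₀ : x₀ ∈ Dset lam)
    (h : ∀ i, 0 < lam i) : False := by
  obtain ⟨h0, h1, h2⟩ := hx₀
  have hz : ∀ i ∈ Finset.univ, lam i * x₀ i = 0 := by
    rw [← Finset.sum_eq_zero_iff_of_nonneg fun i _ => mul_nonneg (h i).le (h0 i)]
    exact h2
  have : ∀ i ∈ Finset.univ, x₀ i = 0 := fun i hi => by
    have h3 := hz i hi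
    rcases mul_eq_zero.mp h3 with h4 | h4
    · exact absurd h4 (h i).ne'
    · exact h4
  rw [Finset.sum_eq_zero this] at h1
  norm_num at h1

/-- Existence of a good low-support pair of polytope points. -/
lemma exists_pqvv' (hn : 3 ≤ n) {lam : Fin n → ℝ} {x₀ : Fin n → ℝ} (hx₀ : x₀ ∈ Dset lam) :
    ∃ p q : Fin n, p ≠ q ∧ ∃ v ∈ Dset lam, ∃ v' ∈ Dset lam,
      (∀ i, i ≠ p → i ≠ q → v i = 0) ∧ v' q = 0 := by
  have hcard : ∀ p q : Fin n, ∃ r : Fin n, r ≠ p ∧ r ≠ q := by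
    intro p q
    by_contra hcon
    push_neg at hcon
    have hsub : (Finset.univ : Finset (Fin n)) ⊆ {p, q} := by
      intro r _
      simp only [Finset.mem_insert, Finset.mem_singleton]
      rcases eq_or_ne r p with h | h
      · exact Or.inl h
      · exact Or.inr (hcon r h)
    have h1 : (Finset.univ : Finset (Fin n)).card ≤ ({p, q} : Finset (Fin n)).card :=
      Finset.card_le_card hsub
    have h2 : ({p, q} : Finset (Fin n)).card ≤ 2 :=
      (Finset.card_insert_le _ _).trans (by simp)
    simp only [Finset.card_univ, Fintype.card_fin] at h1
    omega
  by_cases hz : ∃ r, lam r = 0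
  · obtain ⟨r, hr⟩ := hz
    obtain ⟨q, hq, -⟩ := hcard r r
    refine ⟨r, q, hq.symm, tp r q 1 0, ?_, tp r q 1 0, ?_, ?_, ?_⟩
    · refine ⟨fun i => ?_, ?_, ?_⟩
      · unfold tp; split_ifs <;> norm_num
      · rw [show (∑ i, tp r q 1 0 i) = ∑ i, (1:ℝ) * tp r q 1 0 i by simp only [one_mul],
          sum_tp hq.symm]
        ring
      · rw [sum_tp hq.symm, hr]; ring
    · refine ⟨fun i => ?_, ?_, ?_⟩
      · unfold tp; split_ifs <;> norm_num
      · rw [show (∑ i, tp r q 1 0 i) = ∑ i, (1:ℝ) * tp r q 1 0 i by simp only [one_mul],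
          sum_tp hq.symm]
        ring
      · rw [sum_tp hq.symm, hr]; ring
    · intro i hip _; unfold tp; simp [hip]
    · unfold tp; simp [hq]
  · push_neg at hz
    have hp : ∃ p, 0 < lam p := by
      by_contra hcon
      push_neg at hcon
      have : ∀ i, 0 < -lam i := fun i => by
        have hle := hcon i
        rcases lt_or_eq_of_le hle with h | h
        · linarith
        · exact absurd h (hz i)
      exact exists_neg (lam := fun i => -lam i)
        ⟨hx₀.1, hx₀.2.1, by simp only [neg_mul]; rw [Finset.sum_neg_distrib, hx₀.2.2, neg_zero]⟩ this
    have hq : ∃ q, lam q < 0 := by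
      by_contra hcon
      push_neg at hcon
      have : ∀ i, 0 < lam i := fun i => lt_of_le_of_ne (hcon i) (Ne.symm (hz i))
      exact exists_neg hx₀ this
    obtain ⟨p, hp⟩ := hp
    obtain ⟨q, hq⟩ := hq
    have hpq : p ≠ q := fun h => by rw [h] at hp; linarith
    obtain ⟨r, hrp, hrq⟩ := hcard p q
    rcases lt_or_gt_of_ne (hz r) with hr | hr
    · -- lam r < 0 : flip q via v' supported on {p, r}
      refine ⟨p, q, hpq, _, tp_mem hpq hp hq, _, tp_mem hrp.symm hp hr, ?_, ?_⟩
      · intro i hip hiq; unfold tp; simp [hip, hiq]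
      · unfold tp; simp [Ne.symm hpq, Ne.symm hrq]
    · -- lam r > 0 : flip p via v' supported on {r, q}; swap roles of p and q
      refine ⟨q, p, hpq.symm, _, tp_mem hpq hp hq, _, tp_mem hrq hr hq, ?_, ?_⟩
      · intro i hiq hip; unfold tp; simp [hip, hiq]
      · unfold tp; simp [hrp.symm, hpq]

/-- Connectivity of the quadric mod antipode, diagonal case. -/
lemma joined_diag (hn : 3 ≤ n) {lam a b : Fin n → ℝ}
    (ha : a ∈ Kdiag lam) (hb : b ∈ Kdiag lam) :
    JoinedIn (Kdiag lam) a b ∨ JoinedIn (Kdiag lam) a (-b) := by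
  classical
  have hmem : ∀ z : Fin n → ℝ, z ∈ Kdiag lam → (fun i => z i ^ 2) ∈ Dset lam :=
    fun z hz => ⟨fun i => sq_nonneg _, hz.1, hz.2⟩
  obtain ⟨p, q, hpq, v, hv, v', hv', hsupp, hv'q⟩ := exists_pqvv' hn (hmem a ha)
  set b' : Fin n → ℝ := if a p * b p < 0 then -b else b with hb'def
  have hb'K : b' ∈ Kdiag lam := by
    rw [hb'def]; split_ifs with h
    · constructor
      · rw [← hb.1]; exact Finset.sum_congr rfl fun i _ => by simp
      · rw [← hb.2]; exact Finset.sum_congr rfl fun i _ => by simp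
    · exact hb
  have hab' : 0 ≤ a p * b' p := by
    rw [hb'def]; split_ifs with h
    · simp only [Pi.neg_apply, mul_neg]; linarith
    · linarith [not_lt.mp h]
  set τ : Fin n → ℝ := fun i => if b' i < 0 then -1 else if 0 < b' i then 1
      else (if a i < 0 then -1 else 1) with hτdef
  set σ : Fin n → ℝ := fun i => if a i < 0 then -1 else if 0 < a i then 1 else τ i with hσdef
  set ρ := Function.update σ q (τ q) with hρdef
  have hτ : pm1 τ := fun i => by
    rw [hτdef]; dsimp only; split_ifs
    · exact Or.inr rfl
    · exact Or.inl rfl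
    · exact Or.inr rfl
    · exact Or.inl rfl
  have hσ : pm1 σ := fun i => by
    rw [hσdef]; dsimp only; split_ifs
    · exact Or.inr rfl
    · exact Or.inl rfl
    · exact hτ i
  have hρ : pm1 ρ := fun i => by
    rw [hρdef]; rcases eq_or_ne i q with rfl | h
    · rw [Function.update_self]; exact hτ i
    · rw [Function.update_of_ne h]; exact hσ i
  -- facts about lifts
  have h1 : lift σ (fun i => a i ^ 2) = a := by
    funext i
    show σ i * Real.sqrt (a i ^ 2) = a i
    rw [Real.sqrt_sq_eq_abs, hσdef]; dsimp only
    rcases lt_trichotomy (a i) 0 with h | h | h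
    · rw [if_pos h, abs_of_neg h]; ring
    · rw [h]; simp
    · rw [if_neg (by linarith), if_pos h, abs_of_pos h]; ring
  have h2 : lift τ (fun i => b' i ^ 2) = b' := by
    funext i
    show τ i * Real.sqrt (b' i ^ 2) = b' i
    rw [Real.sqrt_sq_eq_abs, hτdef]; dsimp only
    rcases lt_trichotomy (b' i) 0 with h | h | h
    · rw [if_pos h, abs_of_neg h]; ring
    · rw [h]; simp
    · rw [if_neg (by linarith), if_pos h, abs_of_pos h]; ring
  have hσpτp : σ p = τ p := by
    rw [hσdef, hτdef]; dsimp only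
    rcases lt_trichotomy (a p) 0 with h | h | h
    · have hb'p : b' p ≤ 0 := by nlinarith
      rw [if_pos h]
      rcases lt_or_eq_of_le hb'p with h' | h'
      · rw [if_pos h']
      · rw [if_neg (by linarith), if_neg (by linarith), if_pos h]
    · rw [if_neg (by linarith), if_neg (by linarith)]
    · have hb'p : 0 ≤ b' p := by nlinarith
      rw [if_neg (by linarith), if_pos h, if_neg (by linarith)]
      rcases lt_or_eq_of_le hb'p with h' | h'
      · rw [if_pos h']
      · rw [if_neg (by linarith), if_neg (by linarith)]
  have h4 : lift σ v' = lift ρ v' := by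
    funext i
    show σ i * Real.sqrt (v' i) = ρ i * Real.sqrt (v' i)
    rcases eq_or_ne i q with rfl | h
    · rw [hv'q, Real.sqrt_zero, mul_zero, mul_zero]
    · rw [hρdef, Function.update_of_ne h]
  have h5 : lift ρ v = lift τ v := by
    funext i
    show ρ i * Real.sqrt (v i) = τ i * Real.sqrt (v i)
    rcases eq_or_ne i q with rfl | hq'
    · rw [hρdef, Function.update_self]
    · rcases eq_or_ne i p with rfl | hp'
      · rw [hρdef, Function.update_of_ne hq', hσpτp]
      · rw [hsupp i hp' hq', Real.sqrt_zero, mul_zero, mul_zero]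
  have hΦa : (fun i => a i ^ 2) ∈ Dset lam := hmem a ha
  have hΦb' : (fun i => b' i ^ 2) ∈ Dset lam := hmem b' hb'K
  have J : JoinedIn (Kdiag lam) a b' := by
    have J1 : JoinedIn (Kdiag lam) a (lift σ v) := h1 ▸ joined_lift hσ hΦa hv
    have J2 : JoinedIn (Kdiag lam) (lift σ v) (lift σ v') := joined_lift hσ hv hv'
    have J3 : JoinedIn (Kdiag lam) (lift ρ v') (lift ρ v) := joined_lift hρ hv' hv
    have J4 : JoinedIn (Kdiag lam) (lift τ v) b' := h2 ▸ joined_lift hτ hv hΦb'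
    exact J1.trans ((J2.trans (h4 ▸ J3)).trans (h5 ▸ J4))
  rw [hb'def] at J
  by_cases h : a p * b p < 0
  · right; rwa [if_pos h] at J
  · left; rwa [if_neg h] at J

/-- The quadric-on-sphere set for a matrix. -/
def Kmat (C : Matrix (Fin n) (Fin n) ℝ) : Set (Fin n → ℝ) :=
  {z | ∑ i, z i ^ 2 = 1 ∧ z ⬝ᵥ C *ᵥ z = 0}

/-- Connectivity of the quadric mod antipode, matrix case. -/
lemma joined_mat (hn : 3 ≤ n) {C : Matrix (Fin n) (Fin n) ℝ} (hC : C.IsHermitian)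
    {a b : Fin n → ℝ} (ha : a ∈ Kmat C) (hb : b ∈ Kmat C) :
    JoinedIn (Kmat C) a b ∨ JoinedIn (Kmat C) a (-b) := by
  classical
  set U : Matrix (Fin n) (Fin n) ℝ := ↑(hC.eigenvectorUnitary) with hUdef
  set lam := hC.eigenvalues with hlamdef
  have hUU : U * star U = 1 := (Matrix.mem_unitaryGroup_iff).mp hC.eigenvectorUnitary.2
  have hUU' : star U * U = 1 := (Matrix.mem_unitaryGroup_iff').mp hC.eigenvectorUnitary.2
  have hspec : C = U * Matrix.diagonal lam * star U := by
    have h := hC.spectral_theorem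
    rwa [RCLike.ofReal_real_eq_id, Function.id_comp] at h
  have hsum_sq : ∀ z : Fin n → ℝ, ∑ i, z i ^ 2 = z ⬝ᵥ z := fun z => by
    simp [dotProduct, sq]
  have hvecmulU : ∀ w : Fin n → ℝ, (U *ᵥ w) ᵥ* U = w := fun w => by
    have h1 : (U *ᵥ w) ᵥ* U = Uᵀ *ᵥ (U *ᵥ w) := by rw [Matrix.mulVec_transpose]
    rw [h1, ← Matrix.conjTranspose_eq_transpose_of_trivial, Matrix.mulVec_mulVec]
    show (star U * U) *ᵥ w = w
    rw [hUU', Matrix.one_mulVec]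
  have hdot : ∀ w : Fin n → ℝ, (U *ᵥ w) ⬝ᵥ (U *ᵥ w) = w ⬝ᵥ w := fun w => by
    rw [Matrix.dotProduct_mulVec, hvecmulU]
  have hquad : ∀ w : Fin n → ℝ, (U *ᵥ w) ⬝ᵥ C *ᵥ (U *ᵥ w) = ∑ i, lam i * w i ^ 2 := by
    intro w
    have h1 : C *ᵥ (U *ᵥ w) = (U * Matrix.diagonal lam) *ᵥ w := by
      rw [Matrix.mulVec_mulVec, hspec, mul_assoc (U * Matrix.diagonal lam), hUU', mul_one]
    rw [h1, Matrix.dotProduct_mulVec, ← Matrix.vecMul_vecMul, hvecmulU]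
    simp only [dotProduct, Matrix.vecMul_diagonal]
    exact Finset.sum_congr rfl fun i _ => by ring
  have hTinv : ∀ z : Fin n → ℝ, U *ᵥ (star U *ᵥ z) = z := fun z => by
    rw [Matrix.mulVec_mulVec, hUU, Matrix.one_mulVec]
  have hK : ∀ z : Fin n → ℝ, z ∈ Kmat C → star U *ᵥ z ∈ Kdiag lam := by
    intro z hz
    constructor
    · rw [hsum_sq, ← hdot, hTinv, ← hsum_sq]; exact hz.1
    · rw [← hquad, hTinv]; exact hz.2
  have hsub : (fun w => U *ᵥ w) '' Kdiag lam ⊆ Kmat C := by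
    rintro z ⟨w, hw, rfl⟩
    constructor
    · rw [hsum_sq, hdot, ← hsum_sq]; exact hw.1
    · rw [hquad]; exact hw.2
  have hcont : Continuous fun w : Fin n → ℝ => U *ᵥ w := by
    refine continuous_pi fun i => ?_
    show Continuous fun w : Fin n → ℝ => ∑ j, U i j * w j
    exact continuous_finset_sum _ fun j _ => continuous_const.mul (continuous_apply j)
  rcases joined_diag hn (hK a ha) (hK b hb) with J | J
  · left
    have J' := (J.map hcont).mono hsub
    rwa [hTinv, hTinv] at J'
  · right
    have J' := (J.map hcont).mono hsub
    rwa [hTinv, Matrix.mulVec_neg, hTinv] at J'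

/-- The Brickman set. -/
def S (Q₁ Q₂ : Matrix (Fin n) (Fin n) ℝ) : Set (ℝ × ℝ) :=
  {p | ∃ z : Fin n → ℝ, ∑ i, z i ^ 2 = 1 ∧ p = (z ⬝ᵥ Q₁ *ᵥ z, z ⬝ᵥ Q₂ *ᵥ z)}

lemma sum_sq_eq_dot (z : Fin n → ℝ) : ∑ i, z i ^ 2 = z ⬝ᵥ z := by
  simp [dotProduct, sq]

lemma qf_continuous (Q : Matrix (Fin n) (Fin n) ℝ) :
    Continuous fun z : Fin n → ℝ => z ⬝ᵥ Q *ᵥ z := by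
  show Continuous fun z : Fin n → ℝ => ∑ i, z i * ∑ j, Q i j * z j
  exact continuous_finset_sum _ fun i _ => (continuous_apply i).mul
    (continuous_finset_sum _ fun j _ => continuous_const.mul (continuous_apply j))

lemma conv_mem_uIcc {s t A B : ℝ} (hs : 0 ≤ s) (ht : 0 ≤ t) (hst : s + t = 1) :
    s * A + t * B ∈ Set.uIcc A B := by
  obtain rfl : s = 1 - t := by linarith
  have ht1 : t ≤ 1 := by linarith
  rcases le_total A B with h | h
  · rw [Set.uIcc_of_le h]
    constructor <;>
      nlinarith [mul_nonneg ht (sub_nonneg.mpr h), mul_nonneg (sub_nonneg.mpr ht1) (sub_nonneg.mpr h)]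
  · rw [Set.uIcc_of_ge h]
    constructor <;>
      nlinarith [mul_nonneg ht (sub_nonneg.mpr h), mul_nonneg (sub_nonneg.mpr ht1) (sub_nonneg.mpr h)]

lemma brickman_convex (hn : 3 ≤ n) (Q₁ Q₂ : Matrix (Fin n) (Fin n) ℝ)
    (hQ₁ : Q₁.IsSymm) (hQ₂ : Q₂.IsSymm) :
    Convex ℝ (S Q₁ Q₂) := by
  intro p hp q hq s t hs ht hst
  obtain ⟨x, hx1, hpx⟩ := hp
  obtain ⟨y, hy1, hqy⟩ := hq
  by_cases hpq : p = q
  · refine ⟨x, hx1, ?_⟩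
    rw [hpq, ← add_smul, hst, one_smul]
    rw [hpq] at hpx
    exact hpx
  · set c : ℝ × ℝ := (p.2 - q.2, q.1 - p.1) with hcdef
    set d : ℝ := c.1 * p.1 + c.2 * p.2 with hddef
    set C : Matrix (Fin n) (Fin n) ℝ := c.1 • Q₁ + c.2 • Q₂ - d • (1 : Matrix _ _ ℝ)
      with hCdef
    have hC : C.IsHermitian := by
      show Cᴴ = C
      rw [Matrix.conjTranspose_eq_transpose_of_trivial, hCdef, Matrix.transpose_sub,
        Matrix.transpose_add, Matrix.transpose_smul, Matrix.transpose_smul,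
        Matrix.transpose_smul, Matrix.transpose_one, hQ₁, hQ₂]
    have hquad : ∀ z : Fin n → ℝ,
        z ⬝ᵥ C *ᵥ z = c.1 * (z ⬝ᵥ Q₁ *ᵥ z) + c.2 * (z ⬝ᵥ Q₂ *ᵥ z) - d * (z ⬝ᵥ z) := by
      intro z
      rw [hCdef, Matrix.sub_mulVec, Matrix.add_mulVec, Matrix.smul_mulVec,
        Matrix.smul_mulVec, Matrix.smul_mulVec, Matrix.one_mulVec,
        dotProduct_sub, dotProduct_add, dotProduct_smul, dotProduct_smul, dotProduct_smul]
      simp only [smul_eq_mul]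
    have hcq : c.1 * q.1 + c.2 * q.2 = d := by
      rw [hddef, hcdef]; ring
    have e1 : x ⬝ᵥ Q₁ *ᵥ x = p.1 := by rw [hpx]
    have e2 : x ⬝ᵥ Q₂ *ᵥ x = p.2 := by rw [hpx]
    have f1 : y ⬝ᵥ Q₁ *ᵥ y = q.1 := by rw [hqy]
    have f2 : y ⬝ᵥ Q₂ *ᵥ y = q.2 := by rw [hqy]
    have hxK : x ∈ Kmat C := by
      refine ⟨hx1, ?_⟩
      rw [hquad, ← sum_sq_eq_dot x, hx1, e1, e2, hddef]; ring
    have hyK : y ∈ Kmat C := by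
      refine ⟨hy1, ?_⟩
      rw [hquad, ← sum_sq_eq_dot y, hy1, f1, f2]
      linarith [hcq]
    set g : (Fin n → ℝ) → ℝ :=
      fun z => c.2 * (z ⬝ᵥ Q₁ *ᵥ z) - c.1 * (z ⬝ᵥ Q₂ *ᵥ z) with hgdef
    have hgc : Continuous g :=
      (continuous_const.mul (qf_continuous Q₁)).sub (continuous_const.mul (qf_continuous Q₂))
    obtain ⟨y', hy'K, hy'1, hy'2, J⟩ : ∃ y', y' ∈ Kmat C ∧ y' ⬝ᵥ Q₁ *ᵥ y' = q.1 ∧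
        y' ⬝ᵥ Q₂ *ᵥ y' = q.2 ∧ JoinedIn (Kmat C) x y' := by
      rcases joined_mat hn hC hxK hyK with J | J
      · exact ⟨y, hyK, f1, f2, J⟩
      · refine ⟨-y, ⟨?_, ?_⟩, ?_, ?_, J⟩
        · rw [← hy1]; exact Finset.sum_congr rfl fun i _ => by simp
        · rw [Matrix.mulVec_neg, dotProduct_neg, neg_dotProduct, neg_neg]; exact hyK.2
        · rw [Matrix.mulVec_neg, dotProduct_neg, neg_dotProduct, neg_neg]; exact f1
        · rw [Matrix.mulVec_neg, dotProduct_neg, neg_dotProduct, neg_neg]; exact f2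
    obtain ⟨γ, hγ⟩ := J
    have hFcont : ContinuousOn (g ∘ γ.extend) (Set.uIcc 0 1) :=
      (hgc.comp γ.continuous_extend).continuousOn
    have hm1 : (s • p + t • q).1 = s * p.1 + t * q.1 := by simp
    have hm2 : (s • p + t • q).2 = s * p.2 + t * q.2 := by simp
    have hval : c.2 * (s • p + t • q).1 - c.1 * (s • p + t • q).2 ∈
        Set.uIcc ((g ∘ γ.extend) 0) ((g ∘ γ.extend) 1) := by
      have h0 : (g ∘ γ.extend) 0 = c.2 * p.1 - c.1 * p.2 := by
        show g (γ.extend 0) = _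
        rw [Path.extend_zero, hgdef]
        dsimp only
        rw [e1, e2]
      have h1 : (g ∘ γ.extend) 1 = c.2 * q.1 - c.1 * q.2 := by
        show g (γ.extend 1) = _
        rw [Path.extend_one, hgdef]
        dsimp only
        rw [hy'1, hy'2]
      rw [h0, h1, hm1, hm2]
      have : c.2 * (s * p.1 + t * q.1) - c.1 * (s * p.2 + t * q.2)
          = s * (c.2 * p.1 - c.1 * p.2) + t * (c.2 * q.1 - c.1 * q.2) := by ring
      rw [this]
      exact conv_mem_uIcc hs ht hst
    obtain ⟨t₀, ht₀, hgt₀⟩ := intermediate_value_uIcc hFcont hval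
    rw [Set.uIcc_of_le (zero_le_one)] at ht₀
    set z : Fin n → ℝ := γ.extend t₀ with hzdef
    have hz : z ∈ Kmat C := by
      rw [hzdef, γ.extend_apply ht₀]
      exact hγ _
    have hone : z ⬝ᵥ z = 1 := by rw [← sum_sq_eq_dot z, hz.1]
    have e1' : c.1 * (z ⬝ᵥ Q₁ *ᵥ z) + c.2 * (z ⬝ᵥ Q₂ *ᵥ z) = d := by
      have h := hz.2
      rw [hquad, hone] at h
      linarith
    have e2' : c.2 * (z ⬝ᵥ Q₁ *ᵥ z) - c.1 * (z ⬝ᵥ Q₂ *ᵥ z)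
        = c.2 * (s • p + t • q).1 - c.1 * (s • p + t • q).2 := hgt₀
    have e3' : c.1 * (s • p + t • q).1 + c.2 * (s • p + t • q).2 = d := by
      rw [hm1, hm2]
      linear_combination (-s) * hddef + t * hcq + d * hst
    have hcne : c.1 ≠ 0 ∨ c.2 ≠ 0 := by
      by_contra hcon
      push_neg at hcon
      apply hpq
      have hc1 := hcon.1
      have hc2 := hcon.2
      rw [hcdef] at hc1 hc2
      simp only at hc1 hc2
      exact Prod.ext (by linarith) (by linarith)
    have hcpos : 0 < c.1 ^ 2 + c.2 ^ 2 := by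
      rcases hcne with h | h
      · nlinarith [sq_nonneg c.2, mul_self_pos.mpr h]
      · nlinarith [sq_nonneg c.1, mul_self_pos.mpr h]
    have key1 : (c.1 ^ 2 + c.2 ^ 2) * (z ⬝ᵥ Q₁ *ᵥ z - (s • p + t • q).1) = 0 := by
      linear_combination c.1 * e1' - c.1 * e3' + c.2 * e2'
    have key2 : (c.1 ^ 2 + c.2 ^ 2) * (z ⬝ᵥ Q₂ *ᵥ z - (s • p + t • q).2) = 0 := by
      linear_combination c.2 * e1' - c.2 * e3' - c.1 * e2'
    have hΔ1 : z ⬝ᵥ Q₁ *ᵥ z = (s • p + t • q).1 := by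
      rcases mul_eq_zero.mp key1 with h | h
      · exact absurd h hcpos.ne'
      · linarith
    have hΔ2 : z ⬝ᵥ Q₂ *ᵥ z = (s • p + t • q).2 := by
      rcases mul_eq_zero.mp key2 with h | h
      · exact absurd h hcpos.ne'
      · linarith
    exact ⟨z, hz.1, Prod.ext hΔ1.symm hΔ2.symm⟩


end BrickmanAux

/-- (LMI representation of the Brickman set.)  For `n ≥ 3` and real
symmetric `Q₁, Q₂`, the set `S(Q₁,Q₂) = {(xᵀQ₁x, xᵀQ₂x) : ‖x‖ = 1}` coincides with
`{(Tr(Q₁X), Tr(Q₂X)) : X ⪰ 0, Tr X = 1}`. -/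
theorem brickman_lmi {n : ℕ} (hn : 3 ≤ n)
    (Q₁ Q₂ : Matrix (Fin n) (Fin n) ℝ) (hQ₁ : Q₁.IsSymm) (hQ₂ : Q₂.IsSymm) :
    {p : ℝ × ℝ | ∃ x : EuclideanSpace ℝ (Fin n), ‖x‖ = 1 ∧
        p = (x ⬝ᵥ Q₁.mulVec x, x ⬝ᵥ Q₂.mulVec x)} =
      {p : ℝ × ℝ | ∃ X : Matrix (Fin n) (Fin n) ℝ, X.IsSymm ∧ X.PosSemidef ∧
        X.trace = 1 ∧ p = ((Q₁ * X).trace, (Q₂ * X).trace)} := by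
  classical
  have hnorm : ∀ x : EuclideanSpace ℝ (Fin n), ‖x‖ = 1 ↔ ∑ i, x i ^ 2 = 1 := by
    intro x
    rw [EuclideanSpace.norm_eq]
    have hs : ∀ i, ‖x i‖ ^ 2 = x i ^ 2 := fun i => by rw [Real.norm_eq_abs, sq_abs]
    simp_rw [hs]
    constructor
    · intro h
      have h2 := congrArg (· ^ 2) h
      simpa [Real.sq_sqrt (Finset.sum_nonneg fun i _ => sq_nonneg (x i))] using h2
    · intro h
      rw [h, Real.sqrt_one]
  ext p
  simp only [Set.mem_setOf_eq]
  constructor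
  · rintro ⟨x, hx, rfl⟩
    have hx1 : ∑ i, x i ^ 2 = 1 := (hnorm x).mp hx
    refine ⟨Matrix.of fun i j => x i * x j, ?_, Matrix.posSemidef_iff_dotProduct_mulVec.mpr ⟨?_, ?_⟩, ?_, ?_⟩
    · show (Matrix.of fun i j => x i * x j)ᵀ = _
      ext i j
      exact mul_comm _ _
    · show (Matrix.of fun i j => x i * x j)ᴴ = _
      rw [Matrix.conjTranspose_eq_transpose_of_trivial]
      ext i j
      exact mul_comm _ _
    · intro v
      have h1 : ∀ i, ((Matrix.of fun i j => x i * x j) *ᵥ v) i = x i * (∑ j, x j * v j) := by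
        intro i
        show (∑ j, x i * x j * v j) = _
        rw [Finset.mul_sum]
        exact Finset.sum_congr rfl fun j _ => by ring
      have h2 : dotProduct (star v) ((Matrix.of fun i j => x i * x j) *ᵥ v)
          = (∑ j, x j * v j) * (∑ j, x j * v j) := by
        show (∑ i, star v i * ((Matrix.of fun i j => x i * x j) *ᵥ v) i) = _
        simp_rw [h1, star_trivial]
        rw [Finset.sum_mul]
        exact Finset.sum_congr rfl fun i _ => by ring
      rw [h2]
      exact mul_self_nonneg _
    · show (∑ i, x i * x i) = 1
      rw [← hx1]
      exact Finset.sum_congr rfl fun i _ => (sq (x i)).symm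
    · have htr : ∀ Q : Matrix (Fin n) (Fin n) ℝ,
          (Q * Matrix.of fun i j => x i * x j).trace = x ⬝ᵥ Q *ᵥ x := by
        intro Q
        show (∑ i, ∑ j, Q i j * (x j * x i)) = ∑ i, x i * ∑ j, Q i j * x j
        refine Finset.sum_congr rfl fun i _ => ?_
        rw [Finset.mul_sum]
        exact Finset.sum_congr rfl fun j _ => by ring
      rw [htr Q₁, htr Q₂]
  · rintro ⟨X, hXs, hXpsd, hXtr, rfl⟩
    have hH : X.IsHermitian := hXpsd.1
    set U : Matrix (Fin n) (Fin n) ℝ := ↑(hH.eigenvectorUnitary) with hUdef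
    set lam := hH.eigenvalues with hlamdef
    have hUU : U * star U = 1 := (Matrix.mem_unitaryGroup_iff).mp hH.eigenvectorUnitary.2
    have hUU' : star U * U = 1 := (Matrix.mem_unitaryGroup_iff').mp hH.eigenvectorUnitary.2
    have hspec : X = U * Matrix.diagonal lam * star U := by
      have h := hH.spectral_theorem
      rwa [RCLike.ofReal_real_eq_id, Function.id_comp] at h
    have hlam0 : ∀ i, 0 ≤ lam i := fun i => hXpsd.eigenvalues_nonneg i
    have hlamsum : ∑ i, lam i = 1 := by
      have h : X.trace = ∑ i, lam i := by
        rw [hspec, Matrix.trace_mul_cycle, hUU', one_mul, Matrix.trace_diagonal]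
      rw [← h, hXtr]
    set u : Fin n → (Fin n → ℝ) := fun i => fun k => U k i with hudef
    have hunit : ∀ i, ∑ k, u i k ^ 2 = 1 := by
      intro i
      have h : (star U * U) i i = (1 : Matrix (Fin n) (Fin n) ℝ) i i := by rw [hUU']
      rw [Matrix.mul_apply, Matrix.one_apply_eq] at h
      rw [← h]
      refine Finset.sum_congr rfl fun k _ => ?_
      rw [Matrix.star_apply, star_trivial]
      show U k i ^ 2 = _
      ring
    have hXentry : ∀ k j, X k j = ∑ i, lam i * (U k i * U j i) := by
      intro k j
      have h : X k j = (U * Matrix.diagonal lam * star U) k j := by rw [← hspec]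
      rw [h, Matrix.mul_apply]
      refine Finset.sum_congr rfl fun i _ => ?_
      rw [Matrix.mul_diagonal, Matrix.star_apply, star_trivial]
      ring
    have hM : ∀ (Q : Matrix (Fin n) (Fin n) ℝ) i,
        (star U * (Q * U)) i i = u i ⬝ᵥ Q *ᵥ u i := by
      intro Q i
      calc (star U * (Q * U)) i i = ∑ j, U j i * ∑ k, Q j k * U k i := by
            rw [Matrix.mul_apply]
            refine Finset.sum_congr rfl fun j _ => ?_
            rw [Matrix.star_apply, star_trivial, Matrix.mul_apply]
        _ = u i ⬝ᵥ Q *ᵥ u i := rfl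
    have htr : ∀ Q : Matrix (Fin n) (Fin n) ℝ,
        (Q * X).trace = ∑ i, lam i * (u i ⬝ᵥ Q *ᵥ u i) := by
      intro Q
      calc (Q * X).trace = (Q * U * Matrix.diagonal lam * star U).trace := by
            rw [hspec, ← mul_assoc, ← mul_assoc]
        _ = (star U * (Q * U) * Matrix.diagonal lam).trace :=
            Matrix.trace_mul_cycle (Q * U) (Matrix.diagonal lam) (star U)
        _ = ∑ i, (star U * (Q * U)) i i * lam i := by
            rw [Matrix.trace]
            exact Finset.sum_congr rfl fun i _ => by
              rw [Matrix.diag_apply, Matrix.mul_diagonal]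
        _ = ∑ i, lam i * (u i ⬝ᵥ Q *ᵥ u i) :=
            Finset.sum_congr rfl fun i _ => by rw [hM Q i]; ring
    have hfin : ((Q₁ * X).trace, (Q₂ * X).trace)
        = ∑ i, lam i • ((u i ⬝ᵥ Q₁ *ᵥ u i, u i ⬝ᵥ Q₂ *ᵥ u i) : ℝ × ℝ) := by
      rw [htr Q₁, htr Q₂, Prod.ext_iff]
      constructor
      · simp [Prod.fst_sum]
      · simp [Prod.snd_sum]
    have hmem : (∑ i, lam i • ((u i ⬝ᵥ Q₁ *ᵥ u i, u i ⬝ᵥ Q₂ *ᵥ u i) : ℝ × ℝ)) ∈ BrickmanAux.S Q₁ Q₂ :=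
      (BrickmanAux.brickman_convex hn Q₁ Q₂ hQ₁ hQ₂).sum_mem (fun i _ => hlam0 i) hlamsum
        (fun i _ => ⟨u i, hunit i, rfl⟩)
    rw [hfin]
    obtain ⟨z, hz1, hz2⟩ := hmem
    exact ⟨WithLp.toLp 2 z, (hnorm (WithLp.toLp 2 z)).mpr hz1, hz2⟩
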